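/- If the incentive inequalities u(x,x) ≥ u(x,γ) hold for all x, γ (where u(x,x') = p(x') − r(x')·x), then the payment satisfies p(x) = p(0) + x·r(x) − ∫₀ˣ r(t) dt, i.e., the truthful utility û(x) = p(x) − x·r(x) equals û(0) − ∫₀ˣ r(t) dt. -/

import Mathlib

open MeasureTheory intervalIntegral

/-- If the incentive inequalities u(x,x) ≥ u(x,γ) hold for all x, γ ∈ [0,ω]
(where u(x,x') = p(x') − r(x')·x and r is integrable, monotone nonincreasing),
then the payment satisfies p(x) = p(0) + x·r(x) − ∫₀ˣ r(t) dt. -/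
theorem stmt_2 (ω : ℝ) (hω : 0 < ω) (r : ℝ → ℝ)
    (hr : AntitoneOn r (Set.Icc 0 ω))
    (hint : IntervalIntegrable r volume 0 ω)
    (p : ℝ → ℝ)
    (hic : ∀ x ∈ Set.Icc (0:ℝ) ω, ∀ γ ∈ Set.Icc (0:ℝ) ω,
      p x - r x * x ≥ p γ - r γ * x) :
    ∀ x ∈ Set.Icc (0:ℝ) ω,
      p x = p 0 + x * r x - ∫ t in (0:ℝ)..x, r t := by
  intro x hx
  obtain ⟨hx0, hxω⟩ := hx
  set F : ℝ → ℝ := fun y => ∫ t in (0:ℝ)..y, r t with hF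
  set G : ℝ → ℝ := fun y => ((p 0 - r 0 * 0) - (p y - r y * y)) - F y with hG
  -- key increment bound
  have key : ∀ a ∈ Set.Icc (0:ℝ) ω, ∀ b ∈ Set.Icc (0:ℝ) ω, a ≤ b →
      |G b - G a| ≤ (r a - r b) * (b - a) := by
    intro a ha b hb hab
    have hIab : IntervalIntegrable r volume a b := by
      apply hint.mono_set
      rw [Set.uIcc_of_le hab, Set.uIcc_of_le hω.le]
      exact Set.Icc_subset_Icc ha.1 hb.2
    have hI0a : IntervalIntegrable r volume 0 a := by
      apply hint.mono_set
      rw [Set.uIcc_of_le ha.1, Set.uIcc_of_le hω.le]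
      exact Set.Icc_subset_Icc le_rfl ha.2
    have hI0b : IntervalIntegrable r volume 0 b := by
      apply hint.mono_set
      rw [Set.uIcc_of_le hb.1, Set.uIcc_of_le hω.le]
      exact Set.Icc_subset_Icc le_rfl hb.2
    have hmem : ∀ t ∈ Set.Icc a b, t ∈ Set.Icc (0:ℝ) ω :=
      fun t ht => ⟨ha.1.trans ht.1, ht.2.trans hb.2⟩
    -- integral bounds
    have hlo : (b - a) * r b ≤ ∫ t in a..b, r t := by
      have := intervalIntegral.integral_mono_on hab (_root_.intervalIntegrable_const (c := r b))
        hIab (fun t ht => hr (hmem t ht) hb ht.2)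
      simpa using this
    have hhi : (∫ t in a..b, r t) ≤ (b - a) * r a := by
      have := intervalIntegral.integral_mono_on hab hIab
        (_root_.intervalIntegrable_const (c := r a)) (fun t ht => hr ha (hmem t ht) ht.1)
      simpa using this
    have hFdiff : F b - F a = ∫ t in a..b, r t := by
      simp only [hF]
      rw [← intervalIntegral.integral_add_adjacent_intervals hI0a hIab]
      ring
    -- utility bounds from IC
    have h1 := hic a ha b hb  -- p a - r a * a ≥ p b - r b * a
    have h2 := hic b hb a ha  -- p b - r b * b ≥ p a - r a * b
    have hu1 : r b * (b - a) ≤ (p a - r a * a) - (p b - r b * b) := by nlinarith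
    have hu2 : (p a - r a * a) - (p b - r b * b) ≤ r a * (b - a) := by nlinarith
    have : G b - G a = ((p a - r a * a) - (p b - r b * b)) - (F b - F a) := by
      simp only [hG]; ring
    rw [this, hFdiff, abs_le]
    constructor <;> nlinarith
  -- partition bound: for all n > 0, |G x| ≤ (r 0 - r x) * x / n
  have hbound : ∀ n : ℕ, 0 < n → |G x| ≤ (r 0 - r x) * x / n := by
    intro n hn
    have hn' : (n:ℝ) ≠ 0 := Nat.cast_ne_zero.mpr hn.ne'
    set t : ℕ → ℝ := fun i => (i : ℝ) * x / n with ht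
    have htmem : ∀ i ≤ n, t i ∈ Set.Icc (0:ℝ) ω := by
      intro i hi
      constructor
      · positivity
      · have : (i : ℝ) * x / n ≤ x := by
          rw [div_le_iff₀ (by positivity)]
          have : (i:ℝ) ≤ n := Nat.cast_le.mpr hi
          nlinarith
        linarith
    have htstep : ∀ i : ℕ, t (i+1) - t i = x / n := by
      intro i; simp only [ht]; push_cast; ring
    have ht0 : t 0 = 0 := by simp [ht]
    have htn : t n = x := by simp only [ht]; exact mul_div_cancel_left₀ x hn'
    have hG0 : G 0 = 0 := by simp [hG, hF]
    have htel : G x = ∑ i ∈ Finset.range n, (G (t (i+1)) - G (t i)) := by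
      rw [Finset.sum_range_sub (fun i => G (t i)), ht0, htn, hG0, sub_zero]
    calc |G x| ≤ ∑ i ∈ Finset.range n, |G (t (i+1)) - G (t i)| := by
          rw [htel]; exact Finset.abs_sum_le_sum_abs _ _
      _ ≤ ∑ i ∈ Finset.range n, (r (t i) - r (t (i+1))) * (x / n) := by
          apply Finset.sum_le_sum
          intro i hi
          have hi' : i + 1 ≤ n := Finset.mem_range.mp hi
          have := key (t i) (htmem i (le_of_lt (Nat.lt_of_succ_le hi')))
            (t (i+1)) (htmem (i+1) hi') (by
              have := htstep i
              have hxn : 0 ≤ x / n := by positivity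
              linarith)
          rwa [htstep i] at this
      _ = (r 0 - r x) * x / n := by
          rw [← Finset.sum_mul, Finset.sum_range_sub' (fun i => r (t i)), ht0, htn]
          ring
  have hGx : G x = 0 := by
    have htend : Filter.Tendsto (fun n : ℕ => (r 0 - r x) * x / n) Filter.atTop (nhds 0) :=
      tendsto_const_div_atTop_nhds_zero_nat _
    have : |G x| ≤ 0 := by
      refine ge_of_tendsto htend ?_
      filter_upwards [Filter.eventually_gt_atTop 0] with n hn
      exact hbound n hn
    have := abs_nonneg (G x)
    have : |G x| = 0 := le_antisymm ‹|G x| ≤ 0› this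
    exact abs_eq_zero.mp this
  have : ((p 0 - r 0 * 0) - (p x - r x * x)) - F x = 0 := hGx
  simp only [hF] at this
  linarith [this]
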